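/- Let C be a chord or finite gap (convex hull of a finite subset of the circle ℝ/ℤ) for the cubic map σ₃(θ) = 3θ, such that σ₃ restricted to the vertices of C is 2-to-1 onto its image and C has exactly one hole H of length ≥ 1/3. Define the co-critical set coc(C) as the convex hull of the set of points of the closure of H whose σ₃-images lie in σ₃(C). If ℓ = \overline{ab} is an edge of coc(C) with the open arc (a,b) disjoint from C, then σ₃ is injective on (a,b), i.e., the length of (a,b) is at most 1/3. -/
import Mathlib


open Metric Set

noncomputable section

instance : Fact ((0:ℝ) < 1) := ⟨one_pos⟩

/-- The point on the unit circle in `ℂ` corresponding to `x ∈ ℝ/ℤ`, i.e. `exp(2πix)`. -/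
noncomputable def pt (x : AddCircle (1:ℝ)) : ℂ := (AddCircle.toCircle x : ℂ)

/-- The chord of the closed unit disk joining `pt a` and `pt b`. -/
noncomputable def chord (a b : AddCircle (1:ℝ)) : Set ℂ := segment ℝ (pt a) (pt b)

/-- The map `θ ↦ dθ` on `ℝ/ℤ`. -/
def sig (d : ℕ) (x : AddCircle (1:ℝ)) : AddCircle (1:ℝ) := d • x

/-- Two chords are linked (cross) if they are distinct and intersect in the open unit disk. -/
def Linked (a b x y : AddCircle (1:ℝ)) : Prop :=
  chord a b ≠ chord x y ∧ (chord a b ∩ chord x y ∩ Metric.ball (0:ℂ) 1).Nonempty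

/-- The representative of `x ∈ ℝ/ℤ` in `[0,1)`. -/
noncomputable def rep (x : AddCircle (1:ℝ)) : ℝ := ((AddCircle.equivIco 1 0) x : ℝ)

/-- The open positively oriented arc from `a` to `b`. -/
def arc (a b : AddCircle (1:ℝ)) : Set (AddCircle (1:ℝ)) :=
  {x | 0 < rep (x - a) ∧ rep (x - a) < rep (b - a)}

/-- The closed positively oriented arc from `a` to `b`. -/
def closedArc (a b : AddCircle (1:ℝ)) : Set (AddCircle (1:ℝ)) := arc a b ∪ {a, b}

/-- `(a,b)` is a hole of `A`: `a, b ∈ A` and the nonempty open arc `(a,b)` misses `A`. -/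
def IsHole (A : Set (AddCircle (1:ℝ))) (a b : AddCircle (1:ℝ)) : Prop :=
  a ∈ A ∧ b ∈ A ∧ (arc a b).Nonempty ∧ arc a b ∩ A = ∅

/-- The convex hull in `ℂ` of the set of circle points corresponding to `A ⊆ ℝ/ℤ`. -/
noncomputable def hull (A : Set (AddCircle (1:ℝ))) : Set ℂ := convexHull ℝ (pt '' A)

/-- `p, q, r` are distinct and in strict positive circular order. -/
def cyc (p q r : AddCircle (1:ℝ)) : Prop := 0 < rep (q - p) ∧ rep (q - p) < rep (r - p)

/-- A tuple of circle points is in (weak) positive circular order. -/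
def CircOrd {k : ℕ} [NeZero k] (v : Fin k → AddCircle (1:ℝ)) : Prop :=
  Monotone fun i => rep (v i - v 0)
lemma rep_mem (x : AddCircle (1:ℝ)) : rep x ∈ Set.Ico (0:ℝ) 1 := by
  have := (AddCircle.equivIco 1 0 x).2
  simpa [rep] using this

lemma rep_coe {r : ℝ} (h0 : 0 ≤ r) (h1 : r < 1) : rep ((r : ℝ) : AddCircle (1:ℝ)) = r := by
  have h := QuotientAddGroup.equivIcoMod_coe (one_pos) (0:ℝ) r
  have h2 : toIcoMod (one_pos) (0:ℝ) r = r :=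
    (toIcoMod_eq_self one_pos).mpr (by simpa using ⟨h0, h1⟩)
  simp [rep, AddCircle.equivIco, h, h2]

lemma coe_rep (x : AddCircle (1:ℝ)) : ((rep x : ℝ) : AddCircle (1:ℝ)) = x := by
  induction x using QuotientAddGroup.induction_on with
  | H b =>
    have h := QuotientAddGroup.equivIcoMod_coe (one_pos) (0:ℝ) b
    have : rep ((b:ℝ) : AddCircle (1:ℝ)) = toIcoMod one_pos 0 b := by
      simp [rep, AddCircle.equivIco, h]
    rw [this, QuotientAddGroup.eq_iff_sub_mem, toIcoMod_sub_self]
    exact AddSubgroup.zsmul_mem _ (AddSubgroup.mem_zmultiples _) _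

lemma rep_zero : rep (0 : AddCircle (1:ℝ)) = 0 := by
  have : ((0:ℝ) : AddCircle (1:ℝ)) = 0 := by norm_cast
  rw [← this]; exact rep_coe le_rfl one_pos

lemma rep_inj {x y : AddCircle (1:ℝ)} (h : rep x = rep y) : x = y := by
  rw [← coe_rep x, ← coe_rep y, h]

lemma coe_one_eq_zero : ((1:ℝ) : AddCircle (1:ℝ)) = 0 := by
  simpa using AddCircle.coe_period (p := (1:ℝ))

lemma rep_sub (x y : AddCircle (1:ℝ)) :
    rep (x - y) = if rep y ≤ rep x then rep x - rep y else rep x - rep y + 1 := by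
  have hx := rep_mem x; have hy := rep_mem y
  have hxy : x - y = ((rep x - rep y : ℝ) : AddCircle (1:ℝ)) := by
    rw [show ((rep x - rep y : ℝ) : AddCircle (1:ℝ))
        = ((rep x:ℝ):AddCircle (1:ℝ)) - ((rep y:ℝ):AddCircle (1:ℝ)) from
        QuotientAddGroup.mk_sub _ _ _, coe_rep, coe_rep]
  split_ifs with h
  · rw [hxy]; exact rep_coe (by linarith [hy.1]) (by linarith [hx.2, hy.1])
  · push_neg at h
    have h2 : x - y = ((rep x - rep y + 1 : ℝ) : AddCircle (1:ℝ)) := by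
      rw [hxy, show ((rep x - rep y + 1 : ℝ) : AddCircle (1:ℝ))
          = ((rep x - rep y:ℝ):AddCircle (1:ℝ)) + ((1:ℝ):AddCircle (1:ℝ)) from
          QuotientAddGroup.mk_add _ _ _, coe_one_eq_zero, add_zero]
    rw [h2]; exact rep_coe (by linarith [hx.1, hy.2]) (by linarith [hy.1, hx.2])

lemma closedArc_rep_le {a0 b0 x : AddCircle (1:ℝ)} (h : x ∈ closedArc a0 b0) :
    rep (x - a0) ≤ rep (b0 - a0) := by
  rcases h with h | h
  · exact le_of_lt h.2
  · simp only [Set.mem_insert_iff, Set.mem_singleton_iff] at h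
    rcases h with rfl | rfl
    · rw [sub_self, rep_zero]; exact (rep_mem _).1
    · exact le_rfl
/-- if ℓ = ab is an edge of the co-critical set of a degree-two
critical set C (for σ₃) with the open arc (a,b) disjoint from C, then the
length of (a,b) is at most 1/3 (so σ₃ is injective on it). -/
theorem stmt_4 (V : Set (AddCircle (1:ℝ))) (hV : V.Finite) (hVne : V.Nonempty)
    (hdeg2 : ∀ y ∈ sig 3 '' V, (V ∩ sig 3 ⁻¹' {y}).ncard = 2)
    (a0 b0 : AddCircle (1:ℝ))
    (hhole : IsHole V a0 b0) (hlen : 1/3 ≤ rep (b0 - a0))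
    (huniq : ∀ a b, IsHole V a b → 1/3 ≤ rep (b - a) → a = a0 ∧ b = b0)
    (a b : AddCircle (1:ℝ))
    (hedge : IsHole {x ∈ closedArc a0 b0 | sig 3 x ∈ sig 3 '' V} a b)
    (hdisj : arc a b ∩ V = ∅) :
    rep (b - a) ≤ 1/3 := by
  by_contra hcon
  push_neg at hcon
  obtain ⟨ha0V, hb0V, hne0, hdis0⟩ := hhole
  obtain ⟨haW, hbW, hneW, hdisW⟩ := hedge
  set W : Set (AddCircle (1:ℝ)) := {x ∈ closedArc a0 b0 | sig 3 x ∈ sig 3 '' V} with hWdef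
  set L := rep (b0 - a0) with hLdef
  set s := rep (a - a0) with hsdef
  set t := rep (b - a0) with htdef
  have hL1 : L < 1 := (rep_mem _).2
  have hL0 : (0:ℝ) < L := lt_of_lt_of_le (by norm_num) hlen
  have hs0 : 0 ≤ s := (rep_mem _).1
  have ht0 : 0 ≤ t := (rep_mem _).1
  have ht1 : t < 1 := (rep_mem _).2
  have hsL : s ≤ L := closedArc_rep_le haW.1
  have htL : t ≤ L := closedArc_rep_le hbW.1
  have hba : rep (b - a) = if s ≤ t then t - s else t - s + 1 := by
    rw [← sub_sub_sub_cancel_right b a a0, rep_sub]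
  rcases lt_trichotomy s t with hst | hst | hst
  · -- s < t : find the cocritical point a + 1/3 inside arc a b ∩ W
    have hbalt : rep (b - a) = t - s := by rw [hba, if_pos hst.le]
    have h13 : (1:ℝ)/3 < t - s := by rw [hbalt] at hcon; exact hcon
    set x : AddCircle (1:ℝ) := a + ((1/3 : ℝ) : AddCircle (1:ℝ)) with hxdef
    have hxa : rep (x - a) = 1/3 := by
      rw [hxdef, add_sub_cancel_left]; exact rep_coe (by norm_num) (by norm_num)
    have hxa0 : rep (x - a0) = s + 1/3 := by
      have e1 : x - a0 = ((s + 1/3 : ℝ) : AddCircle (1:ℝ)) := by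
        rw [show ((s + 1/3 : ℝ) : AddCircle (1:ℝ))
            = ((s:ℝ):AddCircle (1:ℝ)) + ((1/3:ℝ):AddCircle (1:ℝ)) from
            QuotientAddGroup.mk_add _ _ _, hsdef, coe_rep, hxdef]
        abel
      rw [e1]; exact rep_coe (by linarith) (by linarith)
    have hxab : x ∈ arc a b := by
      refine ⟨by rw [hxa]; norm_num, ?_⟩
      rw [hxa, hbalt]; linarith
    have hxarc : x ∈ arc a0 b0 := by
      refine ⟨by rw [hxa0]; linarith, by rw [hxa0]; linarith⟩
    have hsigx : sig 3 x = sig 3 a := by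
      have h3 : (3:ℕ) • ((1/3:ℝ) : AddCircle (1:ℝ)) = 0 := by
        rw [← QuotientAddGroup.mk_nsmul, show (3:ℕ) • ((1:ℝ)/3) = (1:ℝ) by norm_num,
          coe_one_eq_zero]
      simp only [sig, hxdef, smul_add, h3, add_zero]
    have hxW : x ∈ W := ⟨Or.inl hxarc, by rw [hsigx]; exact haW.2⟩
    have : x ∈ arc a b ∩ W := ⟨hxab, hxW⟩
    rw [hdisW] at this
    exact this
  · -- s = t : then a = b and arc a b is empty, contradicting nonemptiness
    have hab : a = b := by
      have : a - a0 = b - a0 :=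
        rep_inj (show rep (a - a0) = rep (b - a0) from hst)
      exact sub_left_injective this
    have hba0 : rep (b - a) = 0 := by rw [hab, sub_self, rep_zero]
    rw [hba0] at hcon
    linarith
  · -- t < s : wrapping case, V ⊆ {a0, b0}
    have hbalt : rep (b - a) = t - s + 1 := by rw [hba, if_neg (not_le.mpr hst)]
    have hVsub : V ⊆ {a0, b0} := by
      intro v hv
      by_contra hvne
      simp only [Set.mem_insert_iff, Set.mem_singleton_iff, not_or] at hvne
      obtain ⟨hva0, hvb0⟩ := hvne
      have hu1 : rep (v - a0) < 1 := (rep_mem _).2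
      have hu0 : 0 < rep (v - a0) := by
        rcases lt_or_eq_of_le (rep_mem (v - a0)).1 with h | h
        · exact h
        · exfalso; apply hva0
          have : v - a0 = 0 :=
            rep_inj (show rep (v - a0) = rep 0 from by rw [rep_zero]; exact h.symm)
          exact sub_eq_zero.mp this
      have hvarc : v ∉ arc a0 b0 := by
        intro h
        have : v ∈ arc a0 b0 ∩ V := ⟨h, hv⟩
        rw [hdis0] at this; exact this
      have hLu : L ≤ rep (v - a0) := by
        by_contra h
        exact hvarc ⟨hu0, not_le.mp h⟩
      have hLu' : L < rep (v - a0) := by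
        rcases lt_or_eq_of_le hLu with h | h
        · exact h
        · exfalso; apply hvb0
          have : v - a0 = b0 - a0 :=
            rep_inj (show rep (v - a0) = rep (b0 - a0) from h.symm)
          exact sub_left_injective this
      have hva : rep (v - a) = rep (v - a0) - s := by
        rw [← sub_sub_sub_cancel_right v a a0, rep_sub, if_pos (hsL.trans hLu)]
      have hvab : v ∈ arc a b := by
        refine ⟨by rw [hva]; linarith, ?_⟩
        rw [hva, hbalt]; linarith
      have : v ∈ arc a b ∩ V := ⟨hvab, hv⟩
      rw [hdisj] at this; exact this
    -- b0 is in the fiber of sig 3 a0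
    have hy : sig 3 a0 ∈ sig 3 '' V := ⟨a0, ha0V, rfl⟩
    have hcard := hdeg2 _ hy
    have hb0fib : b0 ∈ V ∩ sig 3 ⁻¹' {sig 3 a0} := by
      by_contra hb0f
      have hsub1 : V ∩ sig 3 ⁻¹' {sig 3 a0} ⊆ {a0} := by
        intro z hz
        rcases hVsub hz.1 with h | h
        · exact h
        · simp only [Set.mem_singleton_iff] at h
          exact absurd (h ▸ hz) hb0f
      have := Set.ncard_le_ncard hsub1 (Set.finite_singleton _)
      rw [Set.ncard_singleton] at this
      omega
    have hsig0 : sig 3 b0 = sig 3 a0 := hb0fib.2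
    -- hence 3L is a positive integer < 3, so L ≤ 2/3
    have hLle : L ≤ 2/3 := by
      have h30 : ((3 * L : ℝ) : AddCircle (1:ℝ)) = 0 := by
        have h1 : (3:ℕ) • (b0 - a0) = (0 : AddCircle (1:ℝ)) := by
          have h2 : sig 3 b0 - sig 3 a0 = 0 := sub_eq_zero.mpr hsig0
          simpa [sig, smul_sub] using h2
        rw [← coe_rep (b0 - a0), ← QuotientAddGroup.mk_nsmul] at h1
        rw [show (3 * L : ℝ) = (3:ℕ) • rep (b0 - a0) by rw [← hLdef]; push_cast; ring]
        exact h1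
      obtain ⟨n, hn⟩ := (AddCircle.coe_eq_zero_iff (1:ℝ)).mp h30
      have hn' : (n : ℝ) = 3 * L := by simpa using hn
      have hn3 : n < 3 := by exact_mod_cast show (n:ℝ) < 3 by rw [hn']; linarith
      have hn2 : (n : ℝ) ≤ 2 := by exact_mod_cast show n ≤ 2 by omega
      linarith
    -- the other hole (b0, a0) has length 1 - L ≥ 1/3 : contradiction with uniqueness
    have hrev : rep (a0 - b0) = 1 - L := by
      have e : a0 - b0 = ((1 - L : ℝ) : AddCircle (1:ℝ)) := by
        rw [show ((1 - L:ℝ):AddCircle (1:ℝ))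
            = ((1:ℝ):AddCircle (1:ℝ)) - ((L:ℝ):AddCircle (1:ℝ)) from
            QuotientAddGroup.mk_sub _ _ _, coe_one_eq_zero, hLdef, coe_rep]
        abel
      rw [e]; exact rep_coe (by linarith) (by linarith)
    have hnerev : (arc b0 a0).Nonempty := by
      refine ⟨b0 + (((1 - L)/2 : ℝ) : AddCircle (1:ℝ)), ?_, ?_⟩
      · rw [add_sub_cancel_left, rep_coe (by linarith) (by linarith)]; linarith
      · rw [add_sub_cancel_left, rep_coe (by linarith) (by linarith), hrev]; linarith
    have hdisrev : arc b0 a0 ∩ V = ∅ := by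
      ext z
      simp only [Set.mem_inter_iff, Set.mem_empty_iff_false, iff_false, not_and]
      intro hz hzV
      rcases hVsub hzV with h | h
      · rw [h] at hz
        obtain ⟨hz1, hz2⟩ := hz
        exact lt_irrefl _ hz2
      · simp only [Set.mem_singleton_iff] at h
        rw [h] at hz
        obtain ⟨hz1, hz2⟩ := hz
        rw [sub_self, rep_zero] at hz1
        exact lt_irrefl _ hz1
    have hrevhole : IsHole V b0 a0 := ⟨hb0V, ha0V, hnerev, hdisrev⟩
    have := huniq b0 a0 hrevhole (by rw [hrev]; linarith)
    have hne : b0 = a0 := this.1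
    rw [hne, sub_self, rep_zero] at hLdef
    linarith [hLdef]
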